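/- Let n ≥ 1, let B be a nondegenerate symmetric ℚ-bilinear form on ℚⁿ, let ℓ ≥ 1 be an integer, and write e(x) := exp(2πi·x) for x ∈ ℚ. Let Λ_R ⊆ Λ₁ and Λ_R ⊆ Λ₂ be lattices in ℚⁿ such that Λ' := Λ_R ∩ ℓ·Λ₁^B = Λ_R ∩ ℓ·Λ₂^B, let g: Λ₁ × Λ₂ → ℂˣ be biadditive and invariant under translation by Λ_R in each argument, and let A: Λ₂ → Λ₂ be a centralizer transfer map, i.e., A(Λ₂) = Λ₂ ∩ ℓ·Λ_R^B and A(Λ_R) = Λ_R ∩ ℓ·Λ₂^B. Then (λ + Λ', μ + Λ') ↦ e(−B(λ,μ)/ℓ)·g(λ,μ) is a well-defined pairing f̂: (Λ₁/Λ') × (Λ₂/Λ') → ℂˣ, and f̂ is perfect if and only if the induced pairing a_g^ℓ: (Λ₁/Λ_R) × (Λ₂/Λ_R) → ℂˣ, (λ̄,μ̄) ↦ e(−B(λ,A(μ))/ℓ)·g(λ,A(μ)), is perfect. -/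

import Mathlib

/-- A lattice in `ℚⁿ`: a subgroup generated by a `ℚ`-basis. -/
def IsLattice {n : ℕ} (L : AddSubgroup (Fin n → ℚ)) : Prop :=
  ∃ b : Module.Basis (Fin n) ℚ (Fin n → ℚ), L = AddSubgroup.closure (Set.range b)

/-- The dual lattice `L^B` of `L` with respect to a bilinear form `B`. -/
def dualLattice {n : ℕ} (B : (Fin n → ℚ) →ₗ[ℚ] (Fin n → ℚ) →ₗ[ℚ] ℚ)
    (L : AddSubgroup (Fin n → ℚ)) : AddSubgroup (Fin n → ℚ) where
  carrier := {x | ∀ y ∈ L, ∃ k : ℤ, B x y = (k : ℚ)}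
  zero_mem' := fun y _ => ⟨0, by simp⟩
  add_mem' := by
    intro a b ha hb y hy
    obtain ⟨k, hk⟩ := ha y hy
    obtain ⟨m, hm⟩ := hb y hy
    exact ⟨k + m, by simp [map_add, hk, hm]⟩
  neg_mem' := by
    intro a ha y hy
    obtain ⟨k, hk⟩ := ha y hy
    exact ⟨-k, by simp [hk]⟩

/-- The lattice `ℓ·L`. -/
def smulLat {n : ℕ} (ℓ : ℕ) (L : AddSubgroup (Fin n → ℚ)) : AddSubgroup (Fin n → ℚ) :=
  L.map (DistribMulAction.toAddMonoidHom (Fin n → ℚ) ((ℓ : ℚ)))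

/-- `e(x) = exp(2πi·x)`. -/
noncomputable def ee (x : ℚ) : ℂ := Complex.exp (2 * Real.pi * Complex.I * (x : ℂ))

noncomputable def eeU (x : ℚ) : ℂˣ := Units.mk0 (ee x) (Complex.exp_ne_zero _)

@[simp] lemma eeU_coe (x : ℚ) : (eeU x : ℂ) = ee x := rfl

lemma ee_add (x y : ℚ) : ee (x + y) = ee x * ee y := by
  simp [ee, ← Complex.exp_add, mul_add]

lemma eeU_add (x y : ℚ) : eeU (x + y) = eeU x * eeU y := by
  ext; simp [ee_add]

lemma ee_eq_one_iff {x : ℚ} : ee x = 1 ↔ ∃ k : ℤ, x = k := by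
  rw [ee, Complex.exp_eq_one_iff]
  have h2 : (2 * (Real.pi : ℂ) * Complex.I) ≠ 0 := by
    have : (Real.pi : ℂ) ≠ 0 := Complex.ofReal_ne_zero.mpr Real.pi_ne_zero
    simp [this, Complex.I_ne_zero]
  constructor
  · rintro ⟨k, hk⟩
    refine ⟨k, ?_⟩
    have hx : (x : ℂ) = k := by
      have : (2 * (Real.pi : ℂ) * Complex.I) * x = (2 * (Real.pi : ℂ) * Complex.I) * k := by
        rw [hk]; ring
      exact mul_left_cancel₀ h2 this
    exact_mod_cast hx
  · rintro ⟨k, rfl⟩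
    exact ⟨k, by push_cast; ring⟩

lemma eeU_eq_one_iff {x : ℚ} : eeU x = 1 ↔ ∃ k : ℤ, x = k := by
  rw [← ee_eq_one_iff]
  constructor
  · intro h; rw [← eeU_coe, h, Units.val_one]
  · intro h; ext; simpa using h

section lat
variable {n : ℕ} (B : (Fin n → ℚ) →ₗ[ℚ] (Fin n → ℚ) →ₗ[ℚ] ℚ)

lemma mem_smul_dual_iff {ℓ : ℕ} (hℓ : 1 ≤ ℓ) {L : AddSubgroup (Fin n → ℚ)}
    {x : Fin n → ℚ} :
    x ∈ smulLat ℓ (dualLattice B L) ↔ ∀ y ∈ L, ∃ k : ℤ, B x y = (ℓ : ℚ) * k := by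
  have hℓ0 : (ℓ : ℚ) ≠ 0 := by positivity
  constructor
  · rintro ⟨d, hd, rfl⟩
    intro y hy
    obtain ⟨k, hk⟩ := hd y hy
    exact ⟨k, by simp [DistribMulAction.toAddMonoidHom, map_smul, hk]⟩
  · intro h
    refine ⟨(ℓ : ℚ)⁻¹ • x, fun y hy => ?_, ?_⟩
    · obtain ⟨k, hk⟩ := h y hy
      exact ⟨k, by simp [map_smul, hk]; field_simp⟩
    · show (ℓ : ℚ) • ((ℓ : ℚ)⁻¹ • x) = x
      rw [smul_smul]; field_simp; rw [one_smul]

lemma den_dvd_int (q : ℚ) {N : ℕ} (h : q.den ∣ N) : ∃ z : ℤ, (z : ℚ) = (N : ℚ) * q := by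
  obtain ⟨c, hc⟩ := h
  refine ⟨c * q.num, ?_⟩
  have hq : (q.den : ℚ) * q = q.num := by
    rw [mul_comm]; exact_mod_cast Rat.mul_den_eq_num q
  push_cast
  rw [hc]; push_cast
  rw [mul_comm (q.den : ℚ), mul_assoc, hq]

/-- every element of `closure S` satisfies a property closed under the group ops -/
lemma closure_ind {G : Type*} [AddGroup G] {S : Set G} {P : G → Prop}
    (h0 : P 0) (hadd : ∀ a b, P a → P b → P (a + b)) (hneg : ∀ a, P a → P (-a))
    (hS : ∀ s ∈ S, P s) : ∀ x ∈ AddSubgroup.closure S, P x := by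
  intro x hx
  induction hx using AddSubgroup.closure_induction with
  | mem s hs => exact hS s hs
  | zero => exact h0
  | add a b _ _ ha hb => exact hadd a b ha hb
  | neg a _ ha => exact hneg a ha

lemma exists_nsmul_mem_smul_dual {L : AddSubgroup (Fin n → ℚ)} (hL : IsLattice L)
    (ℓ : ℕ) (hℓ : 1 ≤ ℓ) (v : Fin n → ℚ) :
    ∃ N : ℕ, 0 < N ∧ (N : ℚ) • v ∈ smulLat ℓ (dualLattice B L) := by
  obtain ⟨b, rfl⟩ := hL
  set D : ℕ := ℓ * ∏ i : Fin n, (B v (b i)).den with hD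
  have hD0 : 0 < D := by
    apply Nat.mul_pos (by omega)
    exact Finset.prod_pos fun i _ => (B v (b i)).pos
  refine ⟨D, hD0, ?_⟩
  rw [mem_smul_dual_iff B hℓ]
  intro y hy
  have key : ∀ x ∈ AddSubgroup.closure (Set.range b),
      ∃ k : ℤ, ((∏ i : Fin n, (B v (b i)).den : ℕ) : ℚ) * B v x = k := by
    refine closure_ind ⟨0, by simp⟩ ?_ ?_ ?_
    · rintro a c ⟨k, hk⟩ ⟨m, hm⟩
      exact ⟨k + m, by rw [map_add, mul_add, hk, hm]; push_cast; ring⟩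
    · rintro a ⟨k, hk⟩
      exact ⟨-k, by rw [map_neg, mul_neg, hk]; push_cast; ring⟩
    · rintro s ⟨i, rfl⟩
      obtain ⟨z, hz⟩ := den_dvd_int (B v (b i))
        (Finset.dvd_prod_of_mem (fun j => (B v (b j)).den) (Finset.mem_univ i))
      exact ⟨z, hz.symm⟩
  obtain ⟨k, hk⟩ := key y hy
  refine ⟨k, ?_⟩
  have hBs : B ((D : ℚ) • v) y = (D : ℚ) * B v y := by
    rw [map_smul]; simp
  rw [hBs, hD, Nat.cast_mul, mul_assoc, hk]

lemma exists_uniform_nsmul {L S : AddSubgroup (Fin n → ℚ)} (hL : IsLattice L)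
    (hS : ∀ v : Fin n → ℚ, ∃ N : ℕ, 0 < N ∧ (N : ℚ) • v ∈ S) :
    ∃ N : ℕ, 0 < N ∧ ∀ x ∈ L, (N : ℚ) • x ∈ S := by
  obtain ⟨b, rfl⟩ := hL
  choose Nf hNf0 hNf using fun i : Fin n => hS (b i)
  set N : ℕ := ∏ i : Fin n, Nf i with hN
  have hN0 : 0 < N := Finset.prod_pos fun i _ => hNf0 i
  refine ⟨N, hN0, ?_⟩
  refine closure_ind (by rw [smul_zero]; exact S.zero_mem) ?_ ?_ ?_
  · intro a c ha hc
    rw [smul_add]; exact S.add_mem ha hc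
  · intro a ha
    rw [smul_neg]; exact S.neg_mem ha
  · rintro s ⟨i, rfl⟩
    obtain ⟨c, hc⟩ := Finset.dvd_prod_of_mem Nf (Finset.mem_univ i)
    rw [← hN] at hc
    have hsc : (((c : ℤ) : ℚ)) * (Nf i : ℚ) = (N : ℚ) := by rw [hc]; push_cast; ring
    have key : (N : ℚ) • b i = (c : ℤ) • ((Nf i : ℚ) • b i) := by
      rw [← Int.cast_smul_eq_zsmul ℚ, smul_smul, hsc]
    rw [key]
    exact S.zsmul_mem (hNf i) _

lemma finite_quot {L S : AddSubgroup (Fin n → ℚ)} (hL : IsLattice L) {N : ℕ} (hN : 0 < N)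
    (h : ∀ x ∈ L, (N : ℚ) • x ∈ S) : Finite (↥L ⧸ S.addSubgroupOf L) := by
  have hfg : AddGroup.FG ↥L := by
    rw [AddGroup.fg_iff_addSubgroup_fg]
    obtain ⟨b, rfl⟩ := hL
    rw [AddSubgroup.fg_iff]
    exact ⟨Set.range b, rfl, Set.finite_range b⟩
  have hfgQ : AddGroup.FG (↥L ⧸ S.addSubgroupOf L) :=
    AddGroup.fg_of_surjective (f := QuotientAddGroup.mk' (S.addSubgroupOf L))
      (QuotientAddGroup.mk'_surjective _)
  have htor : AddMonoid.IsTorsion (↥L ⧸ S.addSubgroupOf L) := by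
    intro q
    induction q using QuotientAddGroup.induction_on with
    | H x =>
      rw [isOfFinAddOrder_iff_nsmul_eq_zero]
      refine ⟨N, hN, ?_⟩
      rw [show ((x : ↥L ⧸ S.addSubgroupOf L)) = QuotientAddGroup.mk' (S.addSubgroupOf L) x
        from rfl, ← map_nsmul, QuotientAddGroup.mk'_apply, QuotientAddGroup.eq_zero_iff]
      rw [AddSubgroup.mem_addSubgroupOf]
      have : ((N • x : ↥L) : Fin n → ℚ) = (N : ℚ) • (x : Fin n → ℚ) := by
        push_cast
        rw [Nat.cast_smul_eq_nsmul]
      rw [this]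
      exact h _ x.2
  exact AddCommGroup.finite_of_fg_torsion _ htor

lemma char_equiv (Q : Type*) [AddCommGroup Q] [Finite Q] :
    Nonempty ((Q →+ Additive ℂˣ) ≃ Q) := by
  have hne : NeZero ((Monoid.exponent (Multiplicative Q) : ℂ)) :=
    ⟨Nat.cast_ne_zero.mpr Monoid.exponent_ne_zero_of_finite⟩
  obtain ⟨e⟩ := CommGroup.monoidHom_mulEquiv_of_hasEnoughRootsOfUnity (Multiplicative Q) ℂ
  exact ⟨(AddMonoidHom.toMultiplicativeLeft.trans e.toEquiv).trans Multiplicative.ofAdd.symm⟩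

lemma char_surj {H Q : Type*} [AddCommGroup H] [AddCommGroup Q] [Finite H] [Finite Q]
    (φ : H →+ (Q →+ Additive ℂˣ))
    (hl : ∀ h, (∀ q, φ h q = 0) → h = 0)
    (hr : ∀ q : Q, (∀ h, φ h q = 0) → q = 0) :
    Function.Surjective φ := by
  obtain ⟨eQ⟩ := char_equiv Q
  obtain ⟨eH⟩ := char_equiv H
  have finQ : Finite (Q →+ Additive ℂˣ) := Finite.of_equiv Q eQ.symm
  have finH : Finite (H →+ Additive ℂˣ) := Finite.of_equiv H eH.symm
  have hinj : Function.Injective φ := by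
    rw [injective_iff_map_eq_zero]
    intro h hh
    exact hl h fun q => by rw [hh]; rfl
  have hinj2 : Function.Injective φ.flip := by
    rw [injective_iff_map_eq_zero]
    intro q hq
    exact hr q fun h => by
      have : φ.flip q h = 0 := by rw [hq]; rfl
      exact this
  have le1 : Nat.card H ≤ Nat.card Q := by
    calc Nat.card H ≤ Nat.card (Q →+ Additive ℂˣ) := Nat.card_le_card_of_injective φ hinj
    _ = Nat.card Q := Nat.card_congr eQ
  have le2 : Nat.card Q ≤ Nat.card H := by
    calc Nat.card Q ≤ Nat.card (H →+ Additive ℂˣ) := Nat.card_le_card_of_injective φ.flip hinj2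
    _ = Nat.card H := Nat.card_congr eH
  have hcard : Nat.card (Q →+ Additive ℂˣ) ≤ Nat.card H := by
    rw [Nat.card_congr eQ]; exact le2
  exact (hinj.bijective_of_nat_card_le hcard).surjective

lemma A_injective {ℓ : ℕ} (hℓ : 1 ≤ ℓ) {ΛR Λ₂ : AddSubgroup (Fin n → ℚ)}
    (hR : IsLattice ΛR) (hsub : ΛR ≤ Λ₂) (A : (Fin n → ℚ) →+ (Fin n → ℚ))
    (hA1 : Λ₂.map A = Λ₂ ⊓ smulLat ℓ (dualLattice B ΛR)) :
    Function.Injective A := by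
  let Aₗ := A.toRatLinearMap
  have hsurj : Function.Surjective Aₗ := by
    rw [← LinearMap.range_eq_top, ← top_le_iff]
    obtain ⟨r, hrc⟩ := hR
    rw [← r.span_eq, Submodule.span_le]
    rintro _ ⟨i, rfl⟩
    obtain ⟨N, hN0, hNmem⟩ := exists_nsmul_mem_smul_dual B (L := ΛR) ⟨r, hrc⟩ ℓ hℓ (r i)
    have hrin : r i ∈ ΛR := by
      rw [hrc]; exact AddSubgroup.subset_closure ⟨i, rfl⟩
    have h2 : (N : ℚ) • r i ∈ Λ₂ := by
      rw [Nat.cast_smul_eq_nsmul]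
      exact AddSubgroup.nsmul_mem Λ₂ (hsub hrin) N
    have hmem : (N : ℚ) • r i ∈ Λ₂.map A := by
      rw [hA1]; exact ⟨h2, hNmem⟩
    obtain ⟨w, _, hww⟩ := hmem
    have hN0' : (N : ℚ) ≠ 0 := by positivity
    refine ⟨(N : ℚ)⁻¹ • w, ?_⟩
    have : Aₗ ((N : ℚ)⁻¹ • w) = (N : ℚ)⁻¹ • A w := by
      rw [map_smul]; rfl
    rw [SetLike.mem_coe] at *
    show Aₗ ((N : ℚ)⁻¹ • w) = r i
    rw [this, hww, smul_smul, inv_mul_cancel₀ hN0', one_smul]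
  have hinj : Function.Injective Aₗ := LinearMap.injective_iff_surjective.mpr hsurj
  exact hinj

lemma key_char {ℓ : ℕ} (hℓ : 1 ≤ ℓ) (hBsymm : ∀ x y, B x y = B y x)
    {ΛR Λ₂ : AddSubgroup (Fin n → ℚ)}
    (hR : IsLattice ΛR) (h₂ : IsLattice Λ₂) (hsub : ΛR ≤ Λ₂)
    (χ : (Fin n → ℚ) → ℂˣ)
    (hχadd : ∀ μ ∈ Λ₂, ∀ μ' ∈ Λ₂, χ (μ + μ') = χ μ * χ μ')
    (hχK : ∀ k ∈ Λ₂ ⊓ smulLat ℓ (dualLattice B ΛR), χ k = 1) :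
    ∃ α ∈ ΛR, ∀ μ ∈ Λ₂, χ μ = eeU (-(B α μ) / ℓ) := by
  have hℓ0 : (ℓ : ℚ) ≠ 0 := by positivity
  set K := Λ₂ ⊓ smulLat ℓ (dualLattice B ΛR) with hK
  set J := ΛR ⊓ smulLat ℓ (dualLattice B Λ₂) with hJ
  -- finiteness
  have finQ : Finite (↥Λ₂ ⧸ K.addSubgroupOf Λ₂) := by
    obtain ⟨N, hN0, hN⟩ := exists_uniform_nsmul h₂
      (fun v => exists_nsmul_mem_smul_dual B hR ℓ hℓ v)
    refine finite_quot h₂ hN0 (fun x hx => ⟨?_, hN x hx⟩)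
    rw [Nat.cast_smul_eq_nsmul]
    exact AddSubgroup.nsmul_mem Λ₂ hx N
  have finH : Finite (↥ΛR ⧸ J.addSubgroupOf ΛR) := by
    obtain ⟨N, hN0, hN⟩ := exists_uniform_nsmul hR
      (fun v => exists_nsmul_mem_smul_dual B h₂ ℓ hℓ v)
    refine finite_quot hR hN0 (fun x hx => ⟨?_, hN x hx⟩)
    rw [Nat.cast_smul_eq_nsmul]
    exact AddSubgroup.nsmul_mem ΛR hx N
  -- the pairing, at the level of subtypes
  have hadd2 : ∀ (α : Fin n → ℚ) (μ ν : ↥Λ₂),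
      -(B α ((μ : Fin n → ℚ) + ν)) / ℓ = -(B α μ) / ℓ + -(B α ν) / ℓ := by
    intro α μ ν; rw [map_add]; ring
  let c : ↥ΛR → (↥Λ₂ →+ Additive ℂˣ) := fun α =>
    AddMonoidHom.mk' (fun μ => Additive.ofMul (eeU (-(B α μ) / ℓ)))
      (by
        intro μ ν
        show Additive.ofMul (eeU (-(B α ((μ : Fin n → ℚ) + ν)) / ℓ))
          = Additive.ofMul (eeU (-(B α μ) / ℓ)) + Additive.ofMul (eeU (-(B α ν) / ℓ))
        rw [hadd2, eeU_add]
        rfl)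
  -- c α vanishes on K
  have hcK : ∀ (α : ↥ΛR) (k : ↥Λ₂), k ∈ K.addSubgroupOf Λ₂ → c α k = 0 := by
    intro α k hk
    rw [AddSubgroup.mem_addSubgroupOf] at hk
    obtain ⟨-, hk2⟩ := hk
    obtain ⟨m, hm⟩ := (mem_smul_dual_iff B hℓ).mp hk2 α α.2
    have : -(B α k) / ℓ = ((-m : ℤ) : ℚ) := by
      rw [hBsymm, hm]; push_cast; field_simp
    show Additive.ofMul (eeU (-(B α k) / ℓ)) = 0
    rw [this, eeU_eq_one_iff.mpr ⟨-m, rfl⟩]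
    rfl
  let cq : ↥ΛR → ((↥Λ₂ ⧸ K.addSubgroupOf Λ₂) →+ Additive ℂˣ) := fun α =>
    QuotientAddGroup.lift (K.addSubgroupOf Λ₂) (c α) (hcK α)
  have cq_mk : ∀ (α : ↥ΛR) (μ : ↥Λ₂),
      cq α (QuotientAddGroup.mk μ) = Additive.ofMul (eeU (-(B α μ) / ℓ)) := fun α μ => rfl
  let Ψ : ↥ΛR →+ ((↥Λ₂ ⧸ K.addSubgroupOf Λ₂) →+ Additive ℂˣ) :=
    AddMonoidHom.mk' cq
      (by
        intro α β
        refine QuotientAddGroup.addMonoidHom_ext _ (AddMonoidHom.ext fun (μ : ↥Λ₂) => ?_)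
        have h2 : -(B ((α : Fin n → ℚ) + β) μ) / ℓ = -(B α μ) / ℓ + -(B β μ) / ℓ := by
          rw [map_add]; simp only [LinearMap.add_apply]; ring
        show Additive.ofMul (eeU (-(B ((α : Fin n → ℚ) + β) μ) / ℓ))
          = Additive.ofMul (eeU (-(B α μ) / ℓ)) + Additive.ofMul (eeU (-(B β μ) / ℓ))
        rw [h2, eeU_add]
        rfl)
  have hΨJ : ∀ (α : ↥ΛR), α ∈ J.addSubgroupOf ΛR → Ψ α = 0 := by
    intro α hα
    rw [AddSubgroup.mem_addSubgroupOf] at hα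
    obtain ⟨-, hα2⟩ := hα
    refine QuotientAddGroup.addMonoidHom_ext _ (AddMonoidHom.ext fun (μ : ↥Λ₂) => ?_)
    obtain ⟨m, hm⟩ := (mem_smul_dual_iff B hℓ).mp hα2 μ μ.2
    have heq : -(B α μ) / ℓ = ((-m : ℤ) : ℚ) := by rw [hm]; push_cast; field_simp
    show Additive.ofMul (eeU (-(B α μ) / ℓ)) = 0
    rw [heq, eeU_eq_one_iff.mpr ⟨-m, rfl⟩]
    rfl
  let φ : (↥ΛR ⧸ J.addSubgroupOf ΛR) →+ ((↥Λ₂ ⧸ K.addSubgroupOf Λ₂) →+ Additive ℂˣ) :=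
    QuotientAddGroup.lift (J.addSubgroupOf ΛR) Ψ hΨJ
  have φ_mk : ∀ (α : ↥ΛR) (μ : ↥Λ₂),
      φ (QuotientAddGroup.mk α) (QuotientAddGroup.mk μ)
        = Additive.ofMul (eeU (-(B α μ) / ℓ)) := fun α μ => rfl
  -- radicals are trivial
  have hl : ∀ h, (∀ q, φ h q = 0) → h = 0 := by
    intro h hh
    induction h using QuotientAddGroup.induction_on with
    | H α =>
      rw [QuotientAddGroup.eq_zero_iff, AddSubgroup.mem_addSubgroupOf]
      refine ⟨α.2, (mem_smul_dual_iff B hℓ).mpr fun y hy => ?_⟩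
      have := hh (QuotientAddGroup.mk ⟨y, hy⟩)
      rw [φ_mk] at this
      obtain ⟨m, hm⟩ := eeU_eq_one_iff.mp (by exact_mod_cast this)
      refine ⟨-m, ?_⟩
      have : B α y = -(m * ℓ) := by
        have := hm
        field_simp at this
        linarith [this]
      rw [this]; push_cast; ring
  have hr : ∀ q, (∀ h, φ h q = 0) → q = 0 := by
    intro q hq
    induction q using QuotientAddGroup.induction_on with
    | H μ =>
      rw [QuotientAddGroup.eq_zero_iff, AddSubgroup.mem_addSubgroupOf]
      refine ⟨μ.2, (mem_smul_dual_iff B hℓ).mpr fun y hy => ?_⟩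
      have h1 := hq (QuotientAddGroup.mk (⟨y, hy⟩ : ↥ΛR))
      rw [φ_mk] at h1
      obtain ⟨m, hm⟩ := eeU_eq_one_iff.mp (by exact_mod_cast h1)
      refine ⟨-m, ?_⟩
      have h2 : B y μ = -(m * ℓ) := by
        field_simp at hm
        linarith [hm]
      rw [hBsymm, h2]; push_cast; ring
  -- the character given by χ
  let cχ : ↥Λ₂ →+ Additive ℂˣ :=
    AddMonoidHom.mk' (fun μ => Additive.ofMul (χ μ))
      (by
        intro μ ν
        show Additive.ofMul (χ ((μ : Fin n → ℚ) + ν)) = Additive.ofMul (χ μ) + Additive.ofMul (χ ν)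
        rw [hχadd μ μ.2 ν ν.2]
        rfl)
  have hcχ : ∀ k ∈ K.addSubgroupOf Λ₂, cχ k = 0 := by
    intro k hk
    rw [AddSubgroup.mem_addSubgroupOf] at hk
    show Additive.ofMul (χ k) = 0
    rw [hχK k hk]
    rfl
  let χQ : (↥Λ₂ ⧸ K.addSubgroupOf Λ₂) →+ Additive ℂˣ :=
    QuotientAddGroup.lift (K.addSubgroupOf Λ₂) cχ hcχ
  obtain ⟨h, hh⟩ := char_surj φ hl hr χQ
  induction h using QuotientAddGroup.induction_on with
  | H α =>
    refine ⟨α, α.2, fun μ hμ => ?_⟩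
    have h3 := congrArg (fun f : (↥Λ₂ ⧸ K.addSubgroupOf Λ₂) →+ Additive ℂˣ =>
      f (QuotientAddGroup.mk (⟨μ, hμ⟩ : ↥Λ₂))) hh
    have h4 : Additive.ofMul (eeU (-(B α μ) / ℓ)) = Additive.ofMul (χ μ) := h3
    have h5 := congrArg Additive.toMul h4
    exact h5.symm

end lat


/-- `f̂(λ+Λ',μ+Λ') = e(−B(λ,μ)/ℓ)·g(λ,μ)` is a well-defined pairing
on `(Λ₁/Λ') × (Λ₂/Λ')`, and `f̂` is perfect iff the induced pairing `a_g^ℓ` on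
`(Λ₁/Λ_R) × (Λ₂/Λ_R)` is perfect. Well-definedness and perfectness are stated
element-wise (a radical being trivial in the quotient means it is contained in
`Λ'`, resp. `Λ_R`). -/
theorem stmt6 {n : ℕ} (hn : 1 ≤ n)
    (B : (Fin n → ℚ) →ₗ[ℚ] (Fin n → ℚ) →ₗ[ℚ] ℚ)
    (hBsymm : ∀ x y, B x y = B y x)
    (hBnd : ∀ x, (∀ y, B x y = 0) → x = 0)
    (ℓ : ℕ) (hℓ : 1 ≤ ℓ)
    (ΛR Λ₁ Λ₂ : AddSubgroup (Fin n → ℚ))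
    (hΛR : IsLattice ΛR) (hΛ₁ : IsLattice Λ₁) (hΛ₂ : IsLattice Λ₂)
    (hsub₁ : ΛR ≤ Λ₁) (hsub₂ : ΛR ≤ Λ₂)
    (hΛ' : ΛR ⊓ smulLat ℓ (dualLattice B Λ₁) = ΛR ⊓ smulLat ℓ (dualLattice B Λ₂))
    (g : (Fin n → ℚ) → (Fin n → ℚ) → ℂˣ)
    (hg1 : ∀ lam lam' μ, lam ∈ Λ₁ → lam' ∈ Λ₁ → μ ∈ Λ₂ →
      g (lam + lam') μ = g lam μ * g lam' μ)
    (hg2 : ∀ lam μ μ', lam ∈ Λ₁ → μ ∈ Λ₂ → μ' ∈ Λ₂ →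
      g lam (μ + μ') = g lam μ * g lam μ')
    (hginv1 : ∀ lam μ α, lam ∈ Λ₁ → μ ∈ Λ₂ → α ∈ ΛR → g (lam + α) μ = g lam μ)
    (hginv2 : ∀ lam μ α, lam ∈ Λ₁ → μ ∈ Λ₂ → α ∈ ΛR → g lam (μ + α) = g lam μ)
    (A : (Fin n → ℚ) →+ (Fin n → ℚ))
    (hA1 : Λ₂.map A = Λ₂ ⊓ smulLat ℓ (dualLattice B ΛR))
    (hA2 : ΛR.map A = ΛR ⊓ smulLat ℓ (dualLattice B Λ₂)) :
    -- (a) well-definedness of `f̂` on `(Λ₁/Λ') × (Λ₂/Λ')`: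
    (∀ lam μ α, lam ∈ Λ₁ → μ ∈ Λ₂ → α ∈ ΛR ⊓ smulLat ℓ (dualLattice B Λ₁) →
      (ee (-(B (lam + α) μ) / ℓ) * (g (lam + α) μ : ℂ)
          = ee (-(B lam μ) / ℓ) * (g lam μ : ℂ)) ∧
      (ee (-(B lam (μ + α)) / ℓ) * (g lam (μ + α) : ℂ)
          = ee (-(B lam μ) / ℓ) * (g lam μ : ℂ))) ∧
    -- (b) `f̂` perfect iff `a_g^ℓ` perfect:
    (((∀ lam ∈ Λ₁, (∀ μ ∈ Λ₂, ee (-(B lam μ) / ℓ) * (g lam μ : ℂ) = 1) →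
          lam ∈ ΛR ⊓ smulLat ℓ (dualLattice B Λ₁)) ∧
      (∀ μ ∈ Λ₂, (∀ lam ∈ Λ₁, ee (-(B lam μ) / ℓ) * (g lam μ : ℂ) = 1) →
          μ ∈ ΛR ⊓ smulLat ℓ (dualLattice B Λ₁))) ↔
     ((∀ lam ∈ Λ₁, (∀ μ ∈ Λ₂, ee (-(B lam (A μ)) / ℓ) * (g lam (A μ) : ℂ) = 1) →
          lam ∈ ΛR) ∧
      (∀ μ ∈ Λ₂, (∀ lam ∈ Λ₁, ee (-(B lam (A μ)) / ℓ) * (g lam (A μ) : ℂ) = 1) →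
          μ ∈ ΛR))) := by
  have hℓ0 : (ℓ : ℚ) ≠ 0 := by positivity
  have hg0l : ∀ μ ∈ Λ₂, g 0 μ = 1 := by
    intro μ hμ
    have h := hg1 0 0 μ Λ₁.zero_mem Λ₁.zero_mem hμ
    rw [zero_add] at h
    nth_rewrite 1 [← mul_one (g 0 μ)] at h
    exact (mul_left_cancel h).symm
  have hg0r : ∀ lam ∈ Λ₁, g lam 0 = 1 := by
    intro lam hlam
    have h := hg2 lam 0 0 hlam Λ₂.zero_mem Λ₂.zero_mem
    rw [zero_add] at h
    nth_rewrite 1 [← mul_one (g lam 0)] at h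
    exact (mul_left_cancel h).symm
  have hgR1 : ∀ α ∈ ΛR, ∀ μ ∈ Λ₂, g α μ = 1 := by
    intro α hα μ hμ
    have h := hginv1 0 μ α Λ₁.zero_mem hμ hα
    rw [zero_add] at h
    rw [h]
    exact hg0l μ hμ
  have hgR2 : ∀ lam ∈ Λ₁, ∀ α ∈ ΛR, g lam α = 1 := by
    intro lam hlam α hα
    have h := hginv2 lam 0 α hlam Λ₂.zero_mem hα
    rw [zero_add] at h
    rw [h]
    exact hg0r lam hlam
  have heeB : ∀ (x y : Fin n → ℚ), (∃ k : ℤ, B x y = ℓ * k) → ee (-(B x y) / ℓ) = 1 := by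
    rintro x y ⟨k, hk⟩
    rw [ee_eq_one_iff]
    exact ⟨-k, by rw [hk]; push_cast; field_simp⟩
  constructor
  · -- part (a)
    rintro lam μ α hlam hμ hα
    have hαR : α ∈ ΛR := hα.1
    have hα₂ : α ∈ smulLat ℓ (dualLattice B Λ₂) := by
      have h : α ∈ ΛR ⊓ smulLat ℓ (dualLattice B Λ₂) := hΛ' ▸ hα
      exact h.2
    have hα₁ : α ∈ smulLat ℓ (dualLattice B Λ₁) := hα.2
    constructor
    · rw [hginv1 lam μ α hlam hμ hαR]
      have h5 : -(B (lam + α) μ) / ℓ = -(B α μ) / ℓ + -(B lam μ) / ℓ := by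
        rw [map_add]; simp only [LinearMap.add_apply]; ring
      rw [h5, ee_add, heeB α μ ((mem_smul_dual_iff B hℓ).mp hα₂ μ hμ), one_mul]
    · rw [hginv2 lam μ α hlam hμ hαR]
      have h6 : -(B lam (μ + α)) / ℓ = -(B α lam) / ℓ + -(B lam μ) / ℓ := by
        rw [map_add, hBsymm lam α]; ring
      rw [h6, ee_add, heeB α lam ((mem_smul_dual_iff B hℓ).mp hα₁ lam hlam), one_mul]
  · -- part (b)
    have hAinj : Function.Injective A := A_injective B hℓ hΛR hsub₂ A hA1
    have hAmem₂ : ∀ μ ∈ Λ₂, A μ ∈ Λ₂ := by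
      intro μ hμ
      have h : A μ ∈ Λ₂.map A := ⟨μ, hμ, rfl⟩
      rw [hA1] at h
      exact h.1
    constructor
    · rintro ⟨fL, fR⟩
      constructor
      · -- left radical of a_g^ℓ
        intro lam hlam hlA
        have hχadd : ∀ μ ∈ Λ₂, ∀ μ' ∈ Λ₂,
            (fun v => eeU (-(B lam v) / ℓ) * g lam v) (μ + μ')
              = (fun v => eeU (-(B lam v) / ℓ) * g lam v) μ
                * (fun v => eeU (-(B lam v) / ℓ) * g lam v) μ' := by
          intro μ hμ μ' hμ'
          refine Units.ext ?_
          have hB2 : -(B lam (μ + μ')) / ℓ = -(B lam μ) / ℓ + -(B lam μ') / ℓ := by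
            rw [map_add]; ring
          simp only [Units.val_mul, eeU_coe]
          rw [hB2, ee_add, hg2 lam μ μ' hlam hμ hμ']
          push_cast [Units.val_mul]
          ring
        have hχK : ∀ k ∈ Λ₂ ⊓ smulLat ℓ (dualLattice B ΛR),
            (fun v => eeU (-(B lam v) / ℓ) * g lam v) k = 1 := by
          rintro k ⟨hk₂, hkd⟩
          have h : k ∈ Λ₂.map A := by rw [hA1]; exact ⟨hk₂, hkd⟩
          obtain ⟨ν, hν, rfl⟩ := h
          refine Units.ext ?_
          simp only [Units.val_mul, eeU_coe, Units.val_one]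
          exact hlA ν hν
        obtain ⟨α, hαR, hα⟩ := key_char B hℓ hBsymm hΛR hΛ₂ hsub₂
          (fun v => eeU (-(B lam v) / ℓ) * g lam v) hχadd hχK
        have hlamsub : lam - α ∈ Λ₁ := Λ₁.sub_mem hlam (hsub₁ hαR)
        have hker : ∀ μ ∈ Λ₂, ee (-(B (lam - α) μ) / ℓ) * (g (lam - α) μ : ℂ) = 1 := by
          intro μ hμ
          have hg' : g (lam - α) μ = g lam μ := by
            have h1 := hg1 (lam - α) α μ hlamsub (hsub₁ hαR) hμ
            rw [sub_add_cancel, hgR1 α hαR μ hμ, mul_one] at h1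
            exact h1.symm
          have hB' : -(B (lam - α) μ) / ℓ = -(B lam μ) / ℓ + B α μ / ℓ := by
            rw [map_sub]; simp only [LinearMap.sub_apply]; ring
          have h2 := congrArg Units.val (hα μ hμ)
          simp only [Units.val_mul, eeU_coe] at h2
          rw [hB', ee_add, hg']
          calc ee (-(B lam μ) / ℓ) * ee (B α μ / ℓ) * (g lam μ : ℂ)
              = (ee (-(B lam μ) / ℓ) * (g lam μ : ℂ)) * ee (B α μ / ℓ) := by ring
            _ = ee (-(B α μ) / ℓ) * ee (B α μ / ℓ) := by rw [h2]
            _ = ee (-(B α μ) / ℓ + B α μ / ℓ) := (ee_add _ _).symm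
            _ = 1 := by rw [neg_div, neg_add_cancel]; simp [ee]
        have hmem := fL (lam - α) hlamsub hker
        have hmemR : lam - α ∈ ΛR := hmem.1
        have hfin : lam = (lam - α) + α := by ring
        rw [hfin]
        exact ΛR.add_mem hmemR hαR
      · -- right radical of a_g^ℓ
        intro μ hμ hμA
        have hAμ₂ : A μ ∈ Λ₂ := hAmem₂ μ hμ
        have h1 := fR (A μ) hAμ₂ (fun lam hlam => hμA lam hlam)
        rw [hΛ', ← hA2] at h1
        obtain ⟨α, hαR, hαeq⟩ := h1
        rw [← hAinj hαeq]
        exact hαR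
    · rintro ⟨aL, aR⟩
      constructor
      · intro lam hlam hker
        have hlamR : lam ∈ ΛR := aL lam hlam (fun μ hμ => hker (A μ) (hAmem₂ μ hμ))
        suffices h : lam ∈ ΛR ⊓ smulLat ℓ (dualLattice B Λ₂) by
          rw [← hΛ'] at h; exact h
        refine ⟨hlamR, (mem_smul_dual_iff B hℓ).mpr fun y hy => ?_⟩
        have hky := hker y hy
        rw [show (g lam y : ℂ) = 1 by rw [hgR1 lam hlamR y hy]; rfl, mul_one] at hky
        obtain ⟨m, hm⟩ := ee_eq_one_iff.mp hky
        refine ⟨-m, ?_⟩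
        field_simp at hm
        push_cast
        linarith [hm]
      · intro μ hμ hker
        have hμK : μ ∈ Λ₂ ⊓ smulLat ℓ (dualLattice B ΛR) := by
          refine ⟨hμ, (mem_smul_dual_iff B hℓ).mpr fun y hy => ?_⟩
          have hky := hker y (hsub₁ hy)
          rw [show (g y μ : ℂ) = 1 by rw [hgR1 y hy μ hμ]; rfl, mul_one] at hky
          obtain ⟨m, hm⟩ := ee_eq_one_iff.mp hky
          refine ⟨-m, ?_⟩
          rw [hBsymm]
          field_simp at hm
          push_cast
          linarith [hm]
        rw [← hA1] at hμK
        obtain ⟨ν, hν₂, rfl⟩ := hμK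
        have hνR : ν ∈ ΛR := aR ν hν₂ (fun lam hlam => hker lam hlam)
        have hfin : A ν ∈ ΛR.map A := ⟨ν, hνR, rfl⟩
        rw [hA2] at hfin
        rw [hΛ']
        exact hfin
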